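/- Let A ≠ A' be two networks on n units such that every unit has a nonempty neighborhood in A and in A' (so that all four exposure levels of the heterogeneous thresholds exposure mapping have positive probability under any full-support design). Then there exist a binary treatment vector z ∈ {0,1}^n and a unit i such that f(z,A_i) ≠ f(z,A'_i), where f is the heterogeneous thresholds exposure mapping with thresholds ν_i ∈ [0,1). -/

import Mathlib

open Finset

noncomputable section

open scoped Classical

/-- A network on `n` units: symmetric Boolean adjacency matrix with zero diagonal. -/
def IsNetwork {n : ℕ} (A : Fin n → Fin n → Bool) : Prop :=
  (∀ i j, A i j = A j i) ∧ ∀ i, A i i = false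

/-- The neighborhood `N_i(A)` of unit `i` in network `A`. -/
def nbhd {n : ℕ} (A : Fin n → Fin n → Bool) (i : Fin n) : Finset (Fin n) :=
  univ.filter (fun j => A i j = true)

/-- Proportion of treated neighbors `g(z, A_i)`. -/
def gprop {n : ℕ} (z : Fin n → Bool) (A : Fin n → Fin n → Bool) (i : Fin n) : ℝ :=
  (∑ j ∈ nbhd A i, if z j then (1 : ℝ) else 0) / ((nbhd A i).card : ℝ)

/-- The four exposure levels of the heterogeneous thresholds exposure mapping. -/
inductive Exposure : Type
  | c11 | c01 | c10 | c00
  deriving DecidableEq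

/-- Heterogeneous thresholds exposure mapping with thresholds `ν`. -/
def hetExp {n : ℕ} (ν : Fin n → ℝ) (z : Fin n → Bool) (A : Fin n → Fin n → Bool)
    (i : Fin n) : Exposure :=
  if z i then (if ν i < gprop z A i then .c11 else .c10)
  else (if ν i < gprop z A i then .c01 else .c00)

lemma gprop_indicator {n : ℕ} (S : Finset (Fin n)) (A : Fin n → Fin n → Bool) (i : Fin n) :
    gprop (fun x => decide (x ∈ S)) A i = ((nbhd A i ∩ S).card : ℝ) / ((nbhd A i).card : ℝ) := by
  unfold gprop
  congr 1
  simp only [decide_eq_true_eq]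
  rw [Finset.sum_boole, Finset.filter_mem_eq_inter]

lemma exposure_ne {n : ℕ} (ν : Fin n → ℝ) (z : Fin n → Bool) (A A' : Fin n → Fin n → Bool)
    (i : Fin n) (hzi : z i = false)
    (h : ¬ ((ν i < gprop z A i) ↔ (ν i < gprop z A' i))) :
    hetExp ν z A i ≠ hetExp ν z A' i := by
  unfold hetExp
  rw [hzi]
  simp only [Bool.false_eq_true, if_false]
  by_cases h1 : ν i < gprop z A i <;> by_cases h2 : ν i < gprop z A' i
  · exact absurd (iff_of_true h1 h2) h
  · rw [if_pos h1, if_neg h2]; exact fun hc => Exposure.noConfusion hc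
  · rw [if_neg h1, if_pos h2]; exact fun hc => Exposure.noConfusion hc
  · exact absurd (iff_of_false h1 h2) h

lemma key_sep {n : ℕ} (ν : Fin n → ℝ) (hν : ∀ i, 0 ≤ ν i ∧ ν i < 1)
    (A A' : Fin n → Fin n → Bool)
    (hdA : ∀ i, (nbhd A i).Nonempty) (hdA' : ∀ i, (nbhd A' i).Nonempty)
    (i j : Fin n) (hj : A i j = true) (hj' : A' i j = false) (hAii : A i i = false) :
    ∃ (z : Fin n → Bool) (k : Fin n), hetExp ν z A k ≠ hetExp ν z A' k := by
  obtain ⟨hν0, hν1⟩ := hν i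
  set NA := nbhd A i with hNA
  set NA' := nbhd A' i with hNA'
  set C := NA ∩ NA' with hC
  have hCNA : C ⊆ NA := inter_subset_left
  have hCNA' : C ⊆ NA' := inter_subset_right
  have hjA : j ∈ NA := by simp [hNA, nbhd, hj]
  have hjA' : j ∉ NA' := by simp [hNA', nbhd, hj']
  have hiNA : i ∉ NA := by simp [hNA, nbhd, hAii]
  set d : ℕ := NA.card with hd
  set d' : ℕ := NA'.card with hd'
  have hdpos : 0 < d := card_pos.mpr (hdA i)
  have hd'pos : 0 < d' := card_pos.mpr (hdA' i)
  have hdposR : (0:ℝ) < d := by exact_mod_cast hdpos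
  have hd'posR : (0:ℝ) < d' := by exact_mod_cast hd'pos
  set m := C.card with hm
  set a := (NA \ NA').card with ha
  have hapos : 0 < a := card_pos.mpr ⟨j, mem_sdiff.mpr ⟨hjA, hjA'⟩⟩
  have hmad : a + m = d := card_sdiff_add_card_inter NA NA'
  -- helper to conclude from a chosen treated set S
  have conclude : ∀ S : Finset (Fin n), i ∉ S →
      ¬ ((ν i < ((NA ∩ S).card : ℝ) / d) ↔ (ν i < ((NA' ∩ S).card : ℝ) / d')) →
      ∃ (z : Fin n → Bool) (k : Fin n), hetExp ν z A k ≠ hetExp ν z A' k := by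
    intro S hiS hS
    refine ⟨fun x => decide (x ∈ S), i, exposure_ne ν _ A A' i (by simp [hiS]) ?_⟩
    rw [gprop_indicator, gprop_indicator]
    rw [← hNA, ← hNA']
    exact hS
  set ν0 := ν i with hν0def
  set fl : ℕ := Nat.floor (ν0 * d) with hfl
  set fl' : ℕ := Nat.floor (ν0 * d') with hfl'
  have hνd0 : 0 ≤ ν0 * d := mul_nonneg hν0 (le_of_lt hdposR)
  have hνd'0 : 0 ≤ ν0 * d' := mul_nonneg hν0 (le_of_lt hd'posR)
  by_cases hcase : fl ≤ fl' ∨ (m : ℝ) ≤ ν0 * d'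
  · -- Case I : treat k common neighbors plus all private A-neighbors
    set k : ℕ := min m fl' with hk
    obtain ⟨K, hKC, hKcard⟩ := Finset.exists_subset_card_eq (s := C) (n := k) (min_le_left _ _)
    set S := K ∪ (NA \ NA') with hSdef
    have hSNA : S ⊆ NA := union_subset (hKC.trans hCNA) sdiff_subset
    have hiS : i ∉ S := fun h => hiNA (hSNA h)
    have hNAS : NA ∩ S = S := inter_eq_right.mpr hSNA
    have hdisj : Disjoint K (NA \ NA') := by
      apply Finset.disjoint_left.mpr
      intro x hxK hxs
      exact (mem_sdiff.mp hxs).2 (hCNA' (hKC hxK))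
    have hcardS : S.card = k + a := by
      rw [hSdef, card_union_of_disjoint hdisj, hKcard]
    have hNA'S : NA' ∩ S = K := by
      rw [hSdef, inter_union_distrib_left]
      have h1 : NA' ∩ K = K := inter_eq_right.mpr (hKC.trans hCNA')
      have h2 : NA' ∩ (NA \ NA') = ∅ := by
        apply eq_empty_of_forall_notMem
        intro x hx
        rcases mem_inter.mp hx with ⟨hx1, hx2⟩
        exact (mem_sdiff.mp hx2).2 hx1
      rw [h1, h2, union_empty]
    apply conclude S hiS
    rw [hNAS, hNA'S, hcardS, hKcard]
    -- left side true, right side false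
    have hright : ¬ (ν0 < (k : ℝ) / d') := by
      rw [not_lt, div_le_iff₀ hd'posR]
      calc (k : ℝ) ≤ fl' := by exact_mod_cast min_le_right m fl'
        _ ≤ ν0 * d' := Nat.floor_le hνd'0
    have hleft : ν0 < ((k + a : ℕ) : ℝ) / d := by
      rw [lt_div_iff₀ hdposR]
      by_cases hmf : m ≤ fl'
      · have hkm : k = m := min_eq_left hmf
        have : ((k + a : ℕ) : ℝ) = d := by
          rw [hkm]; exact_mod_cast congrArg Nat.cast (by omega : m + a = d)
        rw [this]
        calc ν0 * d < 1 * d := by exact mul_lt_mul_of_pos_right hν1 hdposR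
          _ = d := one_mul _
      · have hkf : k = fl' := min_eq_right (le_of_not_ge hmf)
        have hflfl' : fl ≤ fl' := by
          rcases hcase with h | h
          · exact h
          · exact absurd (Nat.le_floor h) hmf
        calc ν0 * d < fl + 1 := Nat.lt_floor_add_one _
          _ ≤ ((k + a : ℕ) : ℝ) := by
              have : fl + 1 ≤ k + a := by omega
              exact_mod_cast this
    intro hiff
    exact hright (hiff.mp hleft)
  · -- Case II : treat fl' + 1 common neighbors only
    push_neg at hcase
    obtain ⟨hflfl', hmgt⟩ := hcase
    set k : ℕ := fl' + 1 with hk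
    have hkm : k ≤ m := by
      have : (fl' : ℝ) < m := lt_of_le_of_lt (Nat.floor_le hνd'0) hmgt
      have : fl' < m := by exact_mod_cast this
      omega
    obtain ⟨K, hKC, hKcard⟩ := Finset.exists_subset_card_eq (s := C) (n := k) hkm
    have hiS : i ∉ K := fun h => hiNA (hCNA (hKC h))
    have hNAS : NA ∩ K = K := inter_eq_right.mpr (hKC.trans hCNA)
    have hNA'S : NA' ∩ K = K := inter_eq_right.mpr (hKC.trans hCNA')
    apply conclude K hiS
    rw [hNAS, hNA'S, hKcard]
    have hleft : ¬ (ν0 < (k : ℝ) / d) := by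
      rw [not_lt, div_le_iff₀ hdposR]
      calc (k : ℝ) ≤ fl := by exact_mod_cast (by omega : k ≤ fl)
        _ ≤ ν0 * d := Nat.floor_le hνd0
    have hright : ν0 < (k : ℝ) / d' := by
      rw [lt_div_iff₀ hd'posR]
      calc ν0 * d' < fl' + 1 := Nat.lt_floor_add_one _
        _ = (k : ℝ) := by exact_mod_cast rfl
    intro hiff
    exact hleft (hiff.mpr hright)

/-- Proposition A.1: the heterogeneous thresholds exposure mapping separates any two
distinct networks in which every unit has a nonempty neighborhood. -/
theorem hetExp_separates_networks {n : ℕ} (ν : Fin n → ℝ)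
    (hν : ∀ i, 0 ≤ ν i ∧ ν i < 1)
    (A A' : Fin n → Fin n → Bool)
    (hANet : IsNetwork A) (hA'Net : IsNetwork A')
    (hdegA : ∀ i, (nbhd A i).Nonempty) (hdegA' : ∀ i, (nbhd A' i).Nonempty)
    (hne : A ≠ A') :
    ∃ (z : Fin n → Bool) (i : Fin n), hetExp ν z A i ≠ hetExp ν z A' i := by
  have : ∃ i j, A i j ≠ A' i j := by
    by_contra h
    push_neg at h
    exact hne (funext fun i => funext fun j => h i j)
  obtain ⟨i, j, hij⟩ := this
  cases hb : A i j with
  | true =>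
      have hb' : A' i j = false := by
        cases hb'' : A' i j
        · rfl
        · exact absurd (hb.trans hb''.symm) hij
      exact key_sep ν hν A A' hdegA hdegA' i j hb hb' (hANet.2 i)
  | false =>
      have hb' : A' i j = true := by
        cases hb'' : A' i j
        · exact absurd (hb.trans hb''.symm) hij
        · rfl
      obtain ⟨z, k, h⟩ := key_sep ν hν A' A hdegA' hdegA i j hb' hb (hA'Net.2 i)
      exact ⟨z, k, h.symm⟩
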